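/- For a subspace V ⊆ A, define V^{(hom)} := ⊕_{i=1}^m π_i(V ∩ ker x^i), where π_i: A → E_i is the projection associated to the decomposition A = E_1 ⊕ … ⊕ E_m. Then: (i) V^{(hom)} is homogeneous (V^{(hom)} = ⊕_i (E_i ∩ V^{(hom)})) and dim V^{(hom)} = dim V; (ii) dim(V^{(hom)} ∩ ker x^i) = dim(V ∩ ker x^i) for all i; (iii) if V is x-stable (x(V) ⊆ V), then V^{(hom)} is x-stable. -/

import Mathlib

open Module Submodule

/-- Let `x` be nilpotent of order `m` on `A`, with a grading
`A = E 1 ⊕ … ⊕ E m`, `ker x^i = E 1 ⊕ … ⊕ E i`, `x (E i) ⊆ E (i-1)`, and let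
`π i : A → E i` be the associated projections.  For a subspace `V ⊆ A` put
`V^hom := ⊕_{i=1}^m π i (V ∩ ker x^i)`.  Then:
(i) `V^hom` is homogeneous and `dim V^hom = dim V`;
(ii) `dim (V^hom ∩ ker x^i) = dim (V ∩ ker x^i)` for all `i`;
(iii) if `V` is `x`-stable then so is `V^hom`. -/
theorem homogenization_properties
    (K : Type*) [Field K] [IsAlgClosed K] [CharZero K]
    (A : Type*) [AddCommGroup A] [Module K A] [FiniteDimensional K A]
    (x : Module.End K A) (m : ℕ) (hm : 1 ≤ m)
    (hxm : x ^ m = 0) (hxm1 : x ^ (m - 1) ≠ 0)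
    (E : ℕ → Submodule K A)
    (hEker : ∀ i, i ≤ m → LinearMap.ker (x ^ i) = ⨆ h ∈ Finset.Icc 1 i, E h)
    (hEindep : ∀ i, 1 ≤ i → i ≤ m → Disjoint (E i) (LinearMap.ker (x ^ (i - 1))))
    (hEx : ∀ i, 2 ≤ i → i ≤ m → (E i).map x ≤ E (i - 1))
    (hEx1 : (E 1).map x = ⊥)
    -- the projections `π i : A → E i` attached to the decomposition `A = ⊕ E i`
    (π : ℕ → (A →ₗ[K] A))
    (hπ1 : ∀ i, 1 ≤ i → i ≤ m → ∀ v ∈ E i, π i v = v)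
    (hπ2 : ∀ i h, 1 ≤ i → i ≤ m → 1 ≤ h → h ≤ m → i ≠ h → ∀ v ∈ E h, π i v = 0)
    (V : Submodule K A)
    (Vhom : Submodule K A)
    (hVhom : Vhom = ⨆ i ∈ Finset.Icc 1 m, (V ⊓ LinearMap.ker (x ^ i)).map (π i)) :
    -- (i) homogeneity and preservation of the dimension
    (Vhom = ⨆ h ∈ Finset.Icc 1 m, (E h ⊓ Vhom)) ∧
    (finrank K ↥Vhom = finrank K ↥V) ∧
    -- (ii) the dimensions of the intersections with the kernels are preserved
    (∀ i, 1 ≤ i → i ≤ m →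
      finrank K ↥(Vhom ⊓ LinearMap.ker (x ^ i)) = finrank K ↥(V ⊓ LinearMap.ker (x ^ i))) ∧
    -- (iii) `x`-stability is preserved
    (V.map x ≤ V → Vhom.map x ≤ Vhom) := by
  set kerp : ℕ → Submodule K A := fun i => LinearMap.ker (x ^ i) with hkerp
  set W : ℕ → Submodule K A := fun i => V ⊓ kerp i with hW
  set P : ℕ → Submodule K A := fun i => (W i).map (π i) with hP
  -- basic kernel facts
  have hker_top : kerp m = ⊤ := by simp [hkerp, hxm]
  have hker_mono : ∀ {i j : ℕ}, i ≤ j → kerp i ≤ kerp j := by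
    intro i j hij v hv
    have hv' : (x ^ i) v = 0 := hv
    have : x ^ j = x ^ (j - i) * x ^ i := by rw [← pow_add]; congr 1; omega
    show (x ^ j) v = 0
    rw [this]
    simp [Module.End.mul_apply, hv']
  have hE_le_ker : ∀ h, 1 ≤ h → h ≤ m → E h ≤ kerp h := by
    intro h h1 h2
    rw [show kerp h = LinearMap.ker (x ^ h) from rfl, hEker h h2]
    exact le_iSup₂ (f := fun j (_ : j ∈ Finset.Icc 1 h) => E j) h (Finset.mem_Icc.2 ⟨h1, le_rfl⟩)
  -- π i lands in E i
  have hπ_mem : ∀ i, 1 ≤ i → i ≤ m → ∀ v : A, π i v ∈ E i := by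
    intro i h1 h2 v
    have : (⊤ : Submodule K A) ≤ (E i).comap (π i) := by
      rw [← hker_top, show kerp m = LinearMap.ker (x ^ m) from rfl, hEker m le_rfl]
      refine iSup₂_le ?_
      intro j hj u hu
      obtain ⟨hj1, hj2⟩ := Finset.mem_Icc.1 hj
      by_cases hij : i = j
      · subst hij
        simpa [Submodule.mem_comap, hπ1 i h1 h2 u hu] using hu
      · simp [Submodule.mem_comap, hπ2 i j h1 h2 hj1 hj2 hij u hu]
    exact this (Submodule.mem_top) 
  -- π i kills small kernels
  have hπ_ker : ∀ i j, j < i → i ≤ m → ∀ v ∈ kerp j, π i v = 0 := by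
    intro i j hji him v hv
    have h1 : 1 ≤ i := by omega
    have : kerp j ≤ LinearMap.ker (π i) := by
      rw [show kerp j = LinearMap.ker (x ^ j) from rfl, hEker j (by omega)]
      refine iSup₂_le ?_
      intro l hl u hu
      obtain ⟨hl1, hl2⟩ := Finset.mem_Icc.1 hl
      exact hπ2 i l h1 him hl1 (by omega) (by omega) u hu
    exact this hv
  -- decomposition identity
  have hdecomp : ∀ i, i ≤ m → ∀ v ∈ kerp i, (∑ h ∈ Finset.Icc 1 i, π h v) = v := by
    intro i him v hv
    let S : A →ₗ[K] A := (∑ h ∈ Finset.Icc 1 i, π h) - LinearMap.id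
    have hS : kerp i ≤ LinearMap.ker S := by
      rw [show kerp i = LinearMap.ker (x ^ i) from rfl, hEker i him]
      refine iSup₂_le ?_
      intro j hj u hu
      obtain ⟨hj1, hj2⟩ := Finset.mem_Icc.1 hj
      have hsum : (∑ h ∈ Finset.Icc 1 i, π h) u = u := by
        rw [LinearMap.sum_apply]
        rw [Finset.sum_eq_single j]
        · exact hπ1 j hj1 (by omega) u hu
        · intro h hh hne
          obtain ⟨hh1, hh2⟩ := Finset.mem_Icc.1 hh
          exact hπ2 h j hh1 (by omega) hj1 (by omega) hne u hu
        · intro habs; exact absurd hj habs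
      simp [S, LinearMap.mem_ker, LinearMap.sub_apply, hsum]
    have h2 : S v = 0 := hS hv
    have h3 : (∑ h ∈ Finset.Icc 1 i, π h) v = v := by
      have := sub_eq_zero.1 (by simpa [S, LinearMap.sub_apply] using h2)
      simpa using this
    simpa [LinearMap.sum_apply] using h3
  -- if π i v = 0 on ker x^i then v ∈ ker x^(i-1)
  have hπ_zero : ∀ i, 1 ≤ i → i ≤ m → ∀ v ∈ kerp i, π i v = 0 → v ∈ kerp (i - 1) := by
    intro i h1 h2 v hv hz
    have hdv := hdecomp i h2 v hv
    have hsub : Finset.Icc 1 (i - 1) ⊆ Finset.Icc 1 i := by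
      intro a ha; simp only [Finset.mem_Icc] at *; omega
    have hveq : (∑ h ∈ Finset.Icc 1 (i - 1), π h v) = v := by
      refine (Finset.sum_subset hsub ?_).trans hdv
      intro h hh hnh
      have : h = i := by
        simp only [Finset.mem_Icc] at hh hnh; omega
      rw [this]; exact hz
    rw [← hveq]
    refine Submodule.sum_mem _ ?_
    intro h hh
    obtain ⟨hh1, hh2⟩ := Finset.mem_Icc.1 hh
    exact hker_mono (by omega : h ≤ i - 1) (hE_le_ker h hh1 (by omega) (hπ_mem h hh1 (by omega) v))
  -- pieces
  have hP_le_E : ∀ h, 1 ≤ h → h ≤ m → P h ≤ E h := by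
    intro h h1 h2 u hu
    obtain ⟨w, _, rfl⟩ := hu
    exact hπ_mem h h1 h2 w
  have hP_le_Vhom : ∀ h, h ∈ Finset.Icc 1 m → P h ≤ Vhom := by
    intro h hh
    rw [hVhom]
    exact le_iSup₂ (f := fun j (_ : j ∈ Finset.Icc 1 m) => (V ⊓ LinearMap.ker (x ^ j)).map (π j)) h hh
  have hπ_Vhom : ∀ h, 1 ≤ h → h ≤ m → ∀ v ∈ Vhom, π h v ∈ P h := by
    intro h h1 h2 v hv
    have : Vhom ≤ (P h).comap (π h) := by
      rw [hVhom]
      refine iSup₂_le ?_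
      intro j hj u hu
      obtain ⟨hj1, hj2⟩ := Finset.mem_Icc.1 hj
      have huE : u ∈ E j := hP_le_E j hj1 hj2 hu
      by_cases hjh : j = h
      · subst hjh
        rw [Submodule.mem_comap, hπ1 j hj1 hj2 u huE]; exact hu
      · simp [Submodule.mem_comap, hπ2 h j h1 h2 hj1 hj2 (fun e => hjh e.symm) u huE]
    exact this hv
  have hP_le_ker : ∀ i, i ≤ m → ∀ h ∈ Finset.Icc 1 i, P h ≤ kerp i := by
    intro i hi h hh
    obtain ⟨hh1, hh2⟩ := Finset.mem_Icc.1 hh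
    exact le_trans (hP_le_E h hh1 (by omega)) (le_trans (hE_le_ker h hh1 (by omega)) (hker_mono hh2))
  -- the key identity
  have hkey : ∀ i, i ≤ m → Vhom ⊓ kerp i = ⨆ h ∈ Finset.Icc 1 i, P h := by
    intro i hi
    refine le_antisymm ?_ ?_
    · intro v hv
      obtain ⟨hv1, hv2⟩ := hv
      have hvm : v ∈ kerp m := hker_top ▸ Submodule.mem_top
      have hdv := hdecomp m le_rfl v hvm
      have hsub : Finset.Icc 1 i ⊆ Finset.Icc 1 m := by
        intro a ha; simp only [Finset.mem_Icc] at *; omega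
      have hveq : (∑ h ∈ Finset.Icc 1 i, π h v) = v := by
        refine (Finset.sum_subset hsub ?_).trans hdv
        intro h hh hnh
        have hih : i < h := by simp only [Finset.mem_Icc] at hh hnh; omega
        exact hπ_ker h i hih (by simp only [Finset.mem_Icc] at hh; omega) v hv2
      rw [← hveq]
      refine Submodule.sum_mem _ ?_
      intro h hh
      obtain ⟨hh1, hh2⟩ := Finset.mem_Icc.1 hh
      have : π h v ∈ P h := hπ_Vhom h hh1 (by omega) v hv1
      exact le_iSup₂ (f := fun j (_ : j ∈ Finset.Icc 1 i) => P j) h hh this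
    · refine iSup₂_le ?_
      intro h hh
      obtain ⟨hh1, hh2⟩ := Finset.mem_Icc.1 hh
      exact le_inf (hP_le_Vhom h (Finset.mem_Icc.2 ⟨hh1, by omega⟩)) (hP_le_ker i hi h hh)
  -- dimension counts
  have hW0 : W 0 = ⊥ := by
    have : kerp 0 = ⊥ := by simp [hkerp, Module.End.one_eq_id]
    simp [hW, this]
  have hWle : ∀ i j : ℕ, i ≤ j → W i ≤ W j := fun i j hij =>
    inf_le_inf_left V (hker_mono hij)
  have hPdim : ∀ i, 1 ≤ i → i ≤ m →
      finrank K ↥(P i) + finrank K ↥(W (i - 1)) = finrank K ↥(W i) := by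
    intro i h1 h2
    have hrn := LinearMap.finrank_range_add_finrank_ker ((π i).domRestrict (W i))
    rw [LinearMap.range_domRestrict] at hrn
    have hkereq : LinearMap.ker ((π i).domRestrict (W i))
        = (W (i - 1)).comap (W i).subtype := by
      rw [LinearMap.ker_domRestrict]
      ext w
      simp only [Submodule.mem_comap, LinearMap.mem_ker]
      constructor
      · intro hz
        exact ⟨w.2.1, hπ_zero i h1 h2 w w.2.2 hz⟩
      · intro hwm
        exact hπ_ker i (i - 1) (by omega) h2 w hwm.2
    rw [hkereq] at hrn
    rwa [(Submodule.comapSubtypeEquivOfLe (hWle (i - 1) i (by omega))).finrank_eq] at hrn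
  have hdisj : ∀ i, i < m → Disjoint (⨆ h ∈ Finset.Icc 1 i, P h) (P (i + 1)) := by
    intro i hi
    have h1 : (⨆ h ∈ Finset.Icc 1 i, P h) ≤ kerp i := iSup₂_le (hP_le_ker i (by omega))
    have h2 : P (i + 1) ≤ E (i + 1) := hP_le_E (i + 1) (by omega) (by omega)
    have h3 := (hEindep (i + 1) (by omega) (by omega)).symm
    rw [show i + 1 - 1 = i from rfl] at h3
    exact h3.mono h1 h2
  have hdim : ∀ i, i ≤ m →
      finrank K ↥(⨆ h ∈ Finset.Icc 1 i, P h) = finrank K ↥(W i) := by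
    intro i
    induction i with
    | zero =>
      intro _
      rw [Finset.Icc_eq_empty (by omega), hW0]
      simp
    | succ i ih =>
      intro hi1
      have hIcc : Finset.Icc 1 (i + 1) = insert (i + 1) (Finset.Icc 1 i) := by
        ext a
        simp only [Finset.mem_Icc, Finset.mem_insert]
        omega
      rw [hIcc, Finset.iSup_insert]
      have hsupinf := Submodule.finrank_sup_add_finrank_inf_eq (P (i + 1))
        (⨆ h ∈ Finset.Icc 1 i, P h)
      rw [disjoint_iff.1 (hdisj i (by omega)).symm, finrank_bot, Nat.add_zero] at hsupinf
      have hp := hPdim (i + 1) (by omega) (by omega)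
      rw [show i + 1 - 1 = i from rfl] at hp
      have hihv := ih (by omega)
      omega
  -- assemble the conclusions
  refine ⟨?_, ?_, ?_, ?_⟩
  · refine le_antisymm ?_ (iSup₂_le fun h _ => inf_le_right)
    conv_lhs => rw [hVhom]
    refine iSup₂_le ?_
    intro h hh
    obtain ⟨hh1, hh2⟩ := Finset.mem_Icc.1 hh
    refine le_trans (le_inf (hP_le_E h hh1 hh2) (hP_le_Vhom h hh)) ?_
    exact le_iSup₂ (f := fun j (_ : j ∈ Finset.Icc 1 m) => E j ⊓ Vhom) h hh
  · have h1 : Vhom = Vhom ⊓ kerp m := by rw [hker_top, inf_top_eq]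
    have h2 : W m = V := by
      rw [hW]
      simp only
      rw [hker_top, inf_top_eq]
    rw [h1, hkey m le_rfl, hdim m le_rfl, h2]
  · intro i h1 h2
    show finrank K ↥(Vhom ⊓ kerp i) = finrank K ↥(W i)
    rw [hkey i h2, hdim i h2]
  · intro hstab
    have hstep : ∀ h ∈ Finset.Icc 1 m, (P h).map x ≤ Vhom := by
      intro h hh
      obtain ⟨hh1, hh2⟩ := Finset.mem_Icc.1 hh
      intro u hu
      obtain ⟨p, hp, rfl⟩ := hu
      obtain ⟨w, hw, rfl⟩ := hp
      by_cases hc : h = 1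
      · subst hc
        have hE1 : π 1 w ∈ E 1 := hπ_mem 1 le_rfl hm w
        have : x (π 1 w) ∈ (E 1).map x := Submodule.mem_map_of_mem hE1
        rw [hEx1, Submodule.mem_bot] at this
        rw [this]
        exact Vhom.zero_mem
      · have h2le : 2 ≤ h := by omega
        have hxwV : x w ∈ V := hstab (Submodule.mem_map_of_mem hw.1)
        have hxwk : x w ∈ kerp (h - 1) := by
          show (x ^ (h - 1)) (x w) = 0
          have hpow : x ^ h = x ^ (h - 1) * x := by
            rw [← pow_succ]
            congr 1
            omega
          have : (x ^ (h - 1)) (x w) = (x ^ h) w := by rw [hpow]; rfl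
          rw [this]
          exact hw.2
        have hxwW : x w ∈ W (h - 1) := ⟨hxwV, hxwk⟩
        have hkey2 : x (π h w) = π (h - 1) (x w) := by
          have hdw := hdecomp h hh2 w hw.2
          have expand : π (h - 1) (x w) = ∑ j ∈ Finset.Icc 1 h, π (h - 1) (x (π j w)) := by
            conv_lhs => rw [← hdw]
            rw [map_sum, map_sum]
          rw [expand, Finset.sum_eq_single h]
          · have hEh1 : x (π h w) ∈ E (h - 1) :=
              hEx h h2le hh2 (Submodule.mem_map_of_mem (hπ_mem h hh1 hh2 w))
            exact (hπ1 (h - 1) (by omega) (by omega) _ hEh1).symm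
          · intro j hj hjne
            obtain ⟨hj1, hj2⟩ := Finset.mem_Icc.1 hj
            by_cases hj1' : j = 1
            · subst hj1'
              have : x (π 1 w) ∈ (E 1).map x :=
                Submodule.mem_map_of_mem (hπ_mem 1 le_rfl hm w)
              rw [hEx1, Submodule.mem_bot] at this
              rw [this, map_zero]
            · have hj2le : 2 ≤ j := by omega
              have : x (π j w) ∈ E (j - 1) :=
                hEx j hj2le (by omega) (Submodule.mem_map_of_mem (hπ_mem j hj1 (by omega) w))
              exact hπ2 (h - 1) (j - 1) (by omega) (by omega) (by omega) (by omega)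
                (by omega) _ this
          · intro habs
            exact absurd (Finset.mem_Icc.2 ⟨hh1, le_rfl⟩) habs
        rw [hkey2]
        exact hP_le_Vhom (h - 1) (Finset.mem_Icc.2 ⟨by omega, by omega⟩)
          (Submodule.mem_map_of_mem hxwW)
    calc Vhom.map x = ⨆ h ∈ Finset.Icc 1 m, ((V ⊓ LinearMap.ker (x ^ h)).map (π h)).map x := by
          rw [hVhom]
          simp only [Submodule.map_iSup]
      _ ≤ Vhom := iSup₂_le hstep
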